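/- arXiv:2407.01465 — 2 statements merged into one kernel-verified Lean document; each statement's English description precedes it below -/
import Mathlib

section
/- Let r ≥ 2, let G be a finite simple graph, let M ⊆ V(G) be a K_r-cover of G, and let 𝒟 be a family of cliques of G, each of size at most r − 1 and each contained in M. Assume the triple (G, 𝒟, M) is r-stripped. Then for every integer k the following are equivalent: (i) there exists S ⊆ V(G) with |S| ≤ k that intersects every r-clique of G and every D ∈ 𝒟; (ii) there exists S ⊆ M with |S| ≤ k that intersects every r-clique of G contained in M and every D ∈ 𝒟. -/
open Finset

variable {V : Type*} [Fintype V] [DecidableEq V]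

/-- `M` is a `K_r`-cover of `G`: it intersects every `r`-vertex clique of `G`
(equivalently, `G - M` has no clique on `r` vertices). -/
def KrCover (G : SimpleGraph V) (r : ℕ) (M : Finset V) : Prop :=
  ∀ K : Finset V, G.IsNClique r K → (K ∩ M).Nonempty

/-- In an `r`-stripped context, the annotated instance on `G` is equivalent to
the annotated instance on the induced subgraph `G[M]`. -/
theorem stripped_equivalent_instances (G : SimpleGraph V) (r : ℕ) (hr : 2 ≤ r)
    (M : Finset V) (hM : KrCover G r M)
    (D : Finset (Finset V))
    (hD : ∀ d ∈ D, G.IsClique (d : Set V) ∧ d.card ≤ r - 1 ∧ d ⊆ M)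
    (hstripped : ∀ X : Finset V, G.IsClique (X : Set V) → X ⊆ M →
      1 ≤ X.card → X.card ≤ r - 1 →
      (∃ Y : Finset V, Disjoint X Y ∧ Disjoint Y M ∧ G.IsNClique r (X ∪ Y)) →
      ∃ d ∈ D, d ⊆ X)
    (k : ℕ) :
    (∃ S : Finset V, S.card ≤ k ∧
        (∀ K : Finset V, G.IsNClique r K → (K ∩ S).Nonempty) ∧
        (∀ d ∈ D, (d ∩ S).Nonempty)) ↔
      (∃ S : Finset V, S ⊆ M ∧ S.card ≤ k ∧
        (∀ K : Finset V, G.IsNClique r K → K ⊆ M → (K ∩ S).Nonempty) ∧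
        (∀ d ∈ D, (d ∩ S).Nonempty)) := by
  constructor
  · rintro ⟨S, hSk, hScl, hSD⟩
    refine ⟨S ∩ M, inter_subset_right, le_trans (card_le_card inter_subset_left) hSk, ?_, ?_⟩
    · intro K hK hKM
      obtain ⟨x, hx⟩ := hScl K hK
      rw [mem_inter] at hx
      exact ⟨x, mem_inter.2 ⟨hx.1, mem_inter.2 ⟨hx.2, hKM hx.1⟩⟩⟩
    · intro d hd
      obtain ⟨x, hx⟩ := hSD d hd
      rw [mem_inter] at hx
      exact ⟨x, mem_inter.2 ⟨hx.1, mem_inter.2 ⟨hx.2, (hD d hd).2.2 hx.1⟩⟩⟩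
  · rintro ⟨S, hSM, hSk, hScl, hSD⟩
    refine ⟨S, hSk, ?_, hSD⟩
    intro K hK
    by_cases hKM : K ⊆ M
    · exact hScl K hK hKM
    · have hXY : (K ∩ M) ∪ (K \ M) = K := by rw [Finset.union_comm]; exact Finset.sdiff_union_inter K M
      have hXss : K ∩ M ⊂ K := by
        refine Finset.ssubset_iff_of_subset inter_subset_left |>.2 ?_
        obtain ⟨y, hyK, hyM⟩ := Finset.not_subset.1 hKM
        exact ⟨y, hyK, fun h => hyM (mem_inter.1 h).2⟩
      have h1 : 1 ≤ (K ∩ M).card := card_pos.2 (hM K hK)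
      have h2' : (K ∩ M).card ≤ r - 1 := by
        have hlt := Finset.card_lt_card hXss
        rw [hK.2] at hlt
        omega
      have hclX : G.IsClique ((K ∩ M : Finset V) : Set V) := by
        apply hK.1.subset
        exact_mod_cast (by exact_mod_cast Finset.coe_subset.2 inter_subset_left)
      obtain ⟨d, hdD, hdX⟩ := hstripped (K ∩ M) hclX inter_subset_right h1 h2'
        ⟨K \ M, Finset.disjoint_left.2 (fun {x} hx hy => (Finset.mem_sdiff.1 hy).2 (mem_inter.1 hx).2),
          Finset.sdiff_disjoint, by rw [hXY]; exact hK⟩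
      obtain ⟨x, hx⟩ := hSD d hdD
      rw [mem_inter] at hx
      exact ⟨x, mem_inter.2 ⟨(mem_inter.1 (hdX hx.1)).1, hx.2⟩⟩
end

section
/- Let k ∈ ℕ, let λ ≥ 1 be an integer, let S ≥ 0 be a real number, and let T : ℕ × ℕ → ℝ be a nonnegative function such that: (i) T(0, y) ≤ S for every y; (ii) T(x, y) ≤ S for every x and every y > k; (iii) T(x, y) ≤ T(x − 1, y) + T(x, y + λ) + S for every x ≥ 1 and every y ≤ k; and (iv) T is nondecreasing in its first argument, i.e., T(x, y) ≤ T(x′, y) whenever x ≤ x′. Then for all x, y ∈ ℕ, T(x, y) ≤ x·T(x, y + λ) + (x + 1)·S. -/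
theorem petal_recurrence_step (k lam : ℕ) (hlam : 1 ≤ lam) (S : ℝ) (hS : 0 ≤ S)
    (T : ℕ → ℕ → ℝ) (hT0 : ∀ x y, 0 ≤ T x y)
    (h1 : ∀ y, T 0 y ≤ S)
    (h2 : ∀ x y, k < y → T x y ≤ S)
    (h3 : ∀ x y, 1 ≤ x → y ≤ k → T x y ≤ T (x - 1) y + T x (y + lam) + S)
    (h4 : ∀ x x' y, x ≤ x' → T x y ≤ T x' y) :
    ∀ x y : ℕ, T x y ≤ (x : ℝ) * T x (y + lam) + ((x : ℝ) + 1) * S := by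
  intro x
  induction x with
  | zero =>
    intro y
    simpa using (h1 y).trans (by nlinarith [hT0 0 (y + lam)])
  | succ n ih =>
    intro y
    by_cases hy : k < y
    · have := h2 (n + 1) y hy
      have h0 := hT0 (n + 1) (y + lam)
      push_cast
      nlinarith
    · push_neg at hy
      have step := h3 (n + 1) y (Nat.le_add_left 1 n) hy
      simp only [Nat.add_sub_cancel] at step
      have hmono := h4 n (n + 1) (y + lam) (Nat.le_succ n)
      have ihy := ih y
      push_cast at *
      nlinarith [hT0 n (y + lam)]
end
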